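/- Let (g¹,ρ¹,V¹,𝒱¹,B₀¹) and (g²,ρ²,V²,𝒱²,B₀²) be equivalent standard pentads. Then the associated graded Lie algebras are isomorphic: L(g¹,ρ¹,V¹,𝒱¹,B₀¹) ≅ L(g²,ρ²,V²,𝒱²,B₀²). -/

import Mathlib

/-- A **standard pentad** `(g, ρ, V, 𝒱, B₀)` in the abstract-dual formulation: a Lie algebra
`g` with a non-degenerate invariant bilinear form `B`, representations `ρ` on `V` and `ϱ`
on `W` (with `W` playing the role of the `g`-submodule `𝒱 ⊆ Hom(V, k)`, realized via the
non-degenerate pairing `pair`, so that `ϱ` is the canonical dual action), together with a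
Φ-map `Φ`. -/
structure PentadStruct (k g V W : Type*) [Field k] [LieRing g] [LieAlgebra k g]
    [AddCommGroup V] [Module k V] [AddCommGroup W] [Module k W] where
  ρ : g →ₗ[k] V →ₗ[k] V
  rep_ρ : ∀ a b : g, ρ ⁅a, b⁆ = ρ a ∘ₗ ρ b - ρ b ∘ₗ ρ a
  ϱ : g →ₗ[k] W →ₗ[k] W
  rep_ϱ : ∀ a b : g, ϱ ⁅a, b⁆ = ϱ a ∘ₗ ϱ b - ϱ b ∘ₗ ϱ a
  pair : V →ₗ[k] W →ₗ[k] k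
  pair_compat : ∀ (a : g) (v : V) (w : W), pair (ρ a v) w = - pair v (ϱ a w)
  pair_nondeg_left : ∀ v : V, (∀ w : W, pair v w = 0) → v = 0
  pair_nondeg_right : ∀ w : W, (∀ v : V, pair v w = 0) → w = 0
  B : g →ₗ[k] g →ₗ[k] k
  B_nondeg_left : ∀ a : g, (∀ b : g, B a b = 0) → a = 0
  B_nondeg_right : ∀ b : g, (∀ a : g, B a b = 0) → b = 0
  B_invariant : ∀ a b c : g, B ⁅a, b⁆ c = B a ⁅b, c⁆
  Φ : V →ₗ[k] W →ₗ[k] g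
  Φ_compat : ∀ (a : g) (v : V) (w : W), B a (Φ v w) = pair (ρ a v) w

/-- The graded Lie algebra `L(g, ρ, V, 𝒱, B₀) = ⊕ₙ Vₙ` associated with a standard pentad,
characterized by its defining properties: it is ℤ-graded, its degrees `0`, `1`, `-1` are the
images of `g`, `V`, `𝒱` (compatibly with the Lie structures and the Φ-map), the higher graded
pieces satisfy `V_{i+1} = [V₁, V_i]`, `V_{-i-1} = [V₋₁, V₋ᵢ]` for `i ≥ 1`, and elements of
`Vₙ`, `|n| ≥ 2`, are by construction (as homomorphisms) determined by their brackets with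
`V_{∓1}`. -/
structure AssocGradedLieAlgebra (k g V W : Type*) [Field k] [LieRing g] [LieAlgebra k g]
    [AddCommGroup V] [Module k V] [AddCommGroup W] [Module k W]
    (P : PentadStruct k g V W) (L : Type*) [LieRing L] [LieAlgebra k L] where
  grading : ℤ → Submodule k L
  isInternal : DirectSum.IsInternal grading
  lie_mem : ∀ (n m : ℤ), ∀ x ∈ grading n, ∀ y ∈ grading m, ⁅x, y⁆ ∈ grading (n + m)
  ιg : g →ₗ[k] L
  ιV : V →ₗ[k] L
  ιW : W →ₗ[k] L
  ιg_inj : Function.Injective ιg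
  ιV_inj : Function.Injective ιV
  ιW_inj : Function.Injective ιW
  ιg_range : LinearMap.range ιg = grading 0
  ιV_range : LinearMap.range ιV = grading 1
  ιW_range : LinearMap.range ιW = grading (-1)
  ιg_lie : ∀ a b : g, ιg ⁅a, b⁆ = ⁅ιg a, ιg b⁆
  lie_ιV : ∀ (a : g) (v : V), ⁅ιg a, ιV v⁆ = ιV (P.ρ a v)
  lie_ιW : ∀ (a : g) (w : W), ⁅ιg a, ιW w⁆ = ιW (P.ϱ a w)
  lie_Φ : ∀ (v : V) (w : W), ⁅ιV v, ιW w⁆ = ιg (P.Φ v w)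
  span_pos : ∀ i : ℤ, 1 ≤ i → grading (i + 1)
    = Submodule.span k {z : L | ∃ x ∈ grading 1, ∃ y ∈ grading i, z = ⁅x, y⁆}
  span_neg : ∀ i : ℤ, 1 ≤ i → grading (-i - 1)
    = Submodule.span k {z : L | ∃ x ∈ grading (-1), ∃ y ∈ grading (-i), z = ⁅x, y⁆}
  trans_pos : ∀ n : ℤ, 2 ≤ n → ∀ x ∈ grading n, (∀ y ∈ grading (-1), ⁅x, y⁆ = 0) → x = 0
  trans_neg : ∀ n : ℤ, 2 ≤ n → ∀ x ∈ grading (-n), (∀ y ∈ grading 1, ⁅x, y⁆ = 0) → x = 0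

section Aux
variable {k M : Type*} [CommRing k] [LieRing M] [LieAlgebra k M]

/-- The submodule spanned by brackets of elements of two submodules. -/
def bracketSpan (A B : Submodule k M) : Submodule k M :=
  Submodule.span k {z : M | ∃ x ∈ A, ∃ y ∈ B, z = ⁅x, y⁆}

lemma lie_mem_bracketSpan {A B : Submodule k M} {x y : M} (hx : x ∈ A) (hy : y ∈ B) :
    ⁅x, y⁆ ∈ bracketSpan A B :=
  Submodule.subset_span ⟨x, hx, y, hy, rfl⟩

lemma bracketSpan_le {A B C : Submodule k M} (h : ∀ x ∈ A, ∀ y ∈ B, ⁅x, y⁆ ∈ C) :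
    bracketSpan A B ≤ C := by
  rw [bracketSpan, Submodule.span_le]
  rintro z ⟨x, hx, y, hy, rfl⟩
  exact h x hx y hy

/-- Left adjoint action as a linear map. -/
def adL (x : M) : M →ₗ[k] M where
  toFun y := ⁅x, y⁆
  map_add' := lie_add x
  map_smul' c y := lie_smul c x y

/-- Right bracket as a linear map. -/
def adR (x : M) : M →ₗ[k] M where
  toFun y := ⁅y, x⁆
  map_add' a b := add_lie a b x
  map_smul' c y := smul_lie c y x

lemma lie_bracketSpan_mem {A B C : Submodule k M} {x : M}
    (h : ∀ a ∈ A, ∀ b ∈ B, ⁅x, ⁅a, b⁆⁆ ∈ C) : ∀ z ∈ bracketSpan A B, ⁅x, z⁆ ∈ C := by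
  intro z hz
  have hle : bracketSpan A B ≤ C.comap (adL (k := k) x) :=
    bracketSpan_le fun a ha b hb => h a ha b hb
  exact hle hz

lemma bracketSpan_lie_mem {A B C : Submodule k M} {x : M}
    (h : ∀ a ∈ A, ∀ b ∈ B, ⁅x, ⁅a, b⁆⁆ ∈ C) : ∀ z ∈ bracketSpan A B, ⁅z, x⁆ ∈ C := by
  intro z hz
  rw [← lie_skew]
  exact C.neg_mem (lie_bracketSpan_mem h z hz)

lemma lie_iSup_mem {ι : Sort*} {p : ι → Submodule k M} {C : Submodule k M} {x : M}
    (h : ∀ i, ∀ z ∈ p i, ⁅x, z⁆ ∈ C) : ∀ z ∈ ⨆ i, p i, ⁅x, z⁆ ∈ C := by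
  intro z hz
  have hle : (⨆ i, p i) ≤ C.comap (adL (k := k) x) := iSup_le fun i z hz => h i z hz
  exact hle hz

lemma iSup_lie_mem {ι : Sort*} {p : ι → Submodule k M} {C : Submodule k M} {x : M}
    (h : ∀ i, ∀ z ∈ p i, ⁅z, x⁆ ∈ C) : ∀ z ∈ ⨆ i, p i, ⁅z, x⁆ ∈ C := by
  intro z hz
  have hle : (⨆ i, p i) ≤ C.comap (adR (k := k) x) := iSup_le fun i z hz => h i z hz
  exact hle hz

/-- Iterated bracket span: `iterBracket A B n = [A, [A, … [A, B]]]` (`n` brackets). -/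
def iterBracket (A B : Submodule k M) : ℕ → Submodule k M
  | 0 => B
  | n + 1 => bracketSpan A (iterBracket A B n)

@[simp] lemma iterBracket_zero (A B : Submodule k M) : iterBracket A B 0 = B := rfl
@[simp] lemma iterBracket_succ (A B : Submodule k M) (n : ℕ) :
    iterBracket A B (n + 1) = bracketSpan A (iterBracket A B n) := rfl

end Aux

section ProdLie
variable {K : Type*} [CommRing K] {M N : Type*} [LieRing M] [LieRing N]

instance : Bracket (M × N) (M × N) := ⟨fun x y => (⁅x.1, y.1⁆, ⁅x.2, y.2⁆)⟩

@[simp] lemma prodLie_fst (x y : M × N) : ⁅x, y⁆.1 = ⁅x.1, y.1⁆ := rfl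
@[simp] lemma prodLie_snd (x y : M × N) : ⁅x, y⁆.2 = ⁅x.2, y.2⁆ := rfl

instance : LieRing (M × N) :=
  { (inferInstance : AddCommGroup (M × N)),
    (inferInstance : Bracket (M × N) (M × N)) with
    add_lie := fun x y z => by rw [Prod.ext_iff]; constructor <;> simp [add_lie]
    lie_add := fun x y z => by rw [Prod.ext_iff]; constructor <;> simp [lie_add]
    lie_self := fun x => by rw [Prod.ext_iff]; constructor <;> simp
    leibniz_lie := fun x y z => by
      rw [Prod.ext_iff]
      constructor <;>
        · simp only [prodLie_fst, prodLie_snd, Prod.fst_add, Prod.snd_add]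
          exact leibniz_lie _ _ _ }

instance [LieAlgebra K M] [LieAlgebra K N] : LieAlgebra K (M × N) :=
  { (inferInstance : Module K (M × N)) with
    lie_smul := fun c x y => by rw [Prod.ext_iff]; constructor <;> simp }

def lieFst [LieAlgebra K M] [LieAlgebra K N] : (M × N) →ₗ⁅K⁆ M :=
  { LinearMap.fst K M N with map_lie' := rfl }

def lieSnd [LieAlgebra K M] [LieAlgebra K N] : (M × N) →ₗ⁅K⁆ N :=
  { LinearMap.snd K M N with map_lie' := rfl }

@[simp] lemma lieFst_apply [LieAlgebra K M] [LieAlgebra K N] (x : M × N) :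
    lieFst (K := K) x = x.1 := rfl
@[simp] lemma lieSnd_apply [LieAlgebra K M] [LieAlgebra K N] (x : M × N) :
    lieSnd (K := K) x = x.2 := rfl

end ProdLie

/-- Correspondence (graph-like) property of a submodule of a product relative to
submodules of the factors. -/
def IsCorresp {k L₁ L₂ : Type*} [Field k] [AddCommGroup L₁] [Module k L₁]
    [AddCommGroup L₂] [Module k L₂] (U₁ : Submodule k L₁) (U₂ : Submodule k L₂)
    (G : Submodule k (L₁ × L₂)) : Prop :=
  (∀ z ∈ G, z.1 ∈ U₁ ∧ z.2 ∈ U₂) ∧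
  (U₁ ≤ Submodule.map (LinearMap.fst k L₁ L₂) G) ∧
  (U₂ ≤ Submodule.map (LinearMap.snd k L₁ L₂) G) ∧
  (∀ z ∈ G, z.1 = 0 → z.2 = 0) ∧
  (∀ z ∈ G, z.2 = 0 → z.1 = 0)

/-- If two standard pentads `(g¹,ρ¹,V¹,𝒱¹,B₀¹)` and `(g²,ρ²,V²,𝒱²,B₀²)` are
equivalent (via a Lie algebra isomorphism `τ`, linear isomorphisms `σ`, `ς` and a nonzero scalar
`c` satisfying the compatibilities below), then the associated graded Lie algebras are
isomorphic: `L(g¹,ρ¹,V¹,𝒱¹,B₀¹) ≅ L(g²,ρ²,V²,𝒱²,B₀²)`. -/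
theorem statement9
    {k g₁ V₁ W₁ L₁ g₂ V₂ W₂ L₂ : Type*} [Field k]
    [LieRing g₁] [LieAlgebra k g₁] [AddCommGroup V₁] [Module k V₁]
    [AddCommGroup W₁] [Module k W₁] [LieRing L₁] [LieAlgebra k L₁]
    [LieRing g₂] [LieAlgebra k g₂] [AddCommGroup V₂] [Module k V₂]
    [AddCommGroup W₂] [Module k W₂] [LieRing L₂] [LieAlgebra k L₂]
    (P₁ : PentadStruct k g₁ V₁ W₁) (P₂ : PentadStruct k g₂ V₂ W₂)
    (A₁ : AssocGradedLieAlgebra k g₁ V₁ W₁ P₁ L₁)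
    (A₂ : AssocGradedLieAlgebra k g₂ V₂ W₂ P₂ L₂)
    -- the equivalence of pentads:
    (τ : g₁ ≃ₗ⁅k⁆ g₂) (σ : V₁ ≃ₗ[k] V₂) (ς : W₁ ≃ₗ[k] W₂) (c : k) (hc : c ≠ 0)
    (hσ : ∀ (a : g₁) (x : V₁), σ (P₁.ρ a x) = P₂.ρ (τ a) (σ x))
    (hς : ∀ (a : g₁) (y : W₁), ς (P₁.ϱ a y) = P₂.ϱ (τ a) (ς y))
    (hpair : ∀ (x : V₁) (y : W₁), P₁.pair x y = P₂.pair (σ x) (ς y))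
    (hB : ∀ a b : g₁, P₁.B a b = c * P₂.B (τ a) (τ b)) :
    Nonempty (L₁ ≃ₗ⁅k⁆ L₂) := by
  classical
  -- the rescaled second dual map
  let ς' : W₁ →ₗ[k] W₂ := c⁻¹ • ((ς : W₁ ≃ₗ[k] W₂) : W₁ →ₗ[k] W₂)
  have hς'app : ∀ y : W₁, ς' y = c⁻¹ • ς y := fun y => rfl
  have hτlie : ∀ a b : g₁, τ ⁅a, b⁆ = ⁅τ a, τ b⁆ := fun a b => τ.toLieHom.map_lie a b
  have hς' : ∀ (a : g₁) (y : W₁), ς' (P₁.ϱ a y) = P₂.ϱ (τ a) (ς' y) := by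
    intro a y
    rw [hς'app, hς'app, hς, map_smul]
  have hς'surj : ∀ w₂ : W₂, ∃ w₁ : W₁, ς' w₁ = w₂ := by
    intro w₂
    refine ⟨ς.symm (c • w₂), ?_⟩
    rw [hς'app, ς.apply_symm_apply, smul_smul, inv_mul_cancel₀ hc, one_smul]
  have hΦc : ∀ (x : V₁) (y : W₁), P₂.Φ (σ x) (ς' y) = τ (P₁.Φ x y) := by
    intro x y
    have key : ∀ b : g₂, P₂.B b (P₂.Φ (σ x) (ς' y) - τ (P₁.Φ x y)) = 0 := by
      intro b
      rw [← τ.apply_symm_apply b]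
      set a := τ.symm b with ha
      have h2 : P₂.pair (P₂.ρ (τ a) (σ x)) (ς' y) = P₂.B (τ a) (τ (P₁.Φ x y)) := by
        rw [hς'app, map_smul, ← hσ, smul_eq_mul, ← hpair, ← P₁.Φ_compat, hB,
          inv_mul_cancel_left₀ hc]
      rw [map_sub, P₂.Φ_compat, h2, sub_self]
    have h0 := P₂.B_nondeg_right _ key
    exact sub_eq_zero.mp h0
  -- the graphs of the three isomorphisms, inside L₁ × L₂
  let j₀ : g₁ →ₗ[k] L₁ × L₂ :=
    (A₁.ιg).prod (A₂.ιg ∘ₗ (((τ : g₁ ≃ₗ[k] g₂)) : g₁ →ₗ[k] g₂))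
  have hj₀ : ∀ a : g₁, j₀ a = (A₁.ιg a, A₂.ιg (τ a)) := fun a => rfl
  let jV : V₁ →ₗ[k] L₁ × L₂ := (A₁.ιV).prod (A₂.ιV ∘ₗ ((σ : V₁ ≃ₗ[k] V₂) : V₁ →ₗ[k] V₂))
  have hjV : ∀ v : V₁, jV v = (A₁.ιV v, A₂.ιV (σ v)) := fun v => rfl
  let jW : W₁ →ₗ[k] L₁ × L₂ := (A₁.ιW).prod (A₂.ιW ∘ₗ ς')
  have hjW : ∀ w : W₁, jW w = (A₁.ιW w, A₂.ιW (ς' w)) := fun w => rfl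
  let G0 : Submodule k (L₁ × L₂) := LinearMap.range j₀
  let GV : Submodule k (L₁ × L₂) := LinearMap.range jV
  let GW : Submodule k (L₁ × L₂) := LinearMap.range jW
  -- bracket relations between the generators
  have hbr00 : ∀ a b : g₁, ⁅j₀ a, j₀ b⁆ = j₀ ⁅a, b⁆ := by
    intro a b
    rw [Prod.ext_iff]
    constructor
    · show ⁅A₁.ιg a, A₁.ιg b⁆ = A₁.ιg ⁅a, b⁆
      exact (A₁.ιg_lie a b).symm
    · show ⁅A₂.ιg (τ a), A₂.ιg (τ b)⁆ = A₂.ιg (τ ⁅a, b⁆)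
      rw [hτlie]
      exact (A₂.ιg_lie _ _).symm
  have hbr0V : ∀ (a : g₁) (v : V₁), ⁅j₀ a, jV v⁆ = jV (P₁.ρ a v) := by
    intro a v
    rw [Prod.ext_iff]
    constructor
    · show ⁅A₁.ιg a, A₁.ιV v⁆ = A₁.ιV (P₁.ρ a v)
      exact A₁.lie_ιV a v
    · show ⁅A₂.ιg (τ a), A₂.ιV (σ v)⁆ = A₂.ιV (σ (P₁.ρ a v))
      rw [hσ]
      exact A₂.lie_ιV _ _
  have hbr0W : ∀ (a : g₁) (w : W₁), ⁅j₀ a, jW w⁆ = jW (P₁.ϱ a w) := by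
    intro a w
    rw [Prod.ext_iff]
    constructor
    · show ⁅A₁.ιg a, A₁.ιW w⁆ = A₁.ιW (P₁.ϱ a w)
      exact A₁.lie_ιW a w
    · show ⁅A₂.ιg (τ a), A₂.ιW (ς' w)⁆ = A₂.ιW (ς' (P₁.ϱ a w))
      rw [hς']
      exact A₂.lie_ιW _ _
  have hbrVW : ∀ (v : V₁) (w : W₁), ⁅jV v, jW w⁆ = j₀ (P₁.Φ v w) := by
    intro v w
    rw [Prod.ext_iff]
    constructor
    · show ⁅A₁.ιV v, A₁.ιW w⁆ = A₁.ιg (P₁.Φ v w)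
      exact A₁.lie_Φ v w
    · show ⁅A₂.ιV (σ v), A₂.ιW (ς' w)⁆ = A₂.ιg (τ (P₁.Φ v w))
      rw [← hΦc]
      exact A₂.lie_Φ _ _
  -- elementwise closure properties
  have c00 : ∀ x ∈ G0, ∀ y ∈ G0, ⁅x, y⁆ ∈ G0 := by
    rintro _ ⟨a, rfl⟩ _ ⟨b, rfl⟩
    rw [hbr00]
    exact ⟨⁅a, b⁆, rfl⟩
  have c0V : ∀ x ∈ G0, ∀ y ∈ GV, ⁅x, y⁆ ∈ GV := by
    rintro _ ⟨a, rfl⟩ _ ⟨v, rfl⟩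
    rw [hbr0V]
    exact ⟨_, rfl⟩
  have c0W : ∀ x ∈ G0, ∀ y ∈ GW, ⁅x, y⁆ ∈ GW := by
    rintro _ ⟨a, rfl⟩ _ ⟨w, rfl⟩
    rw [hbr0W]
    exact ⟨_, rfl⟩
  have cVW : ∀ x ∈ GV, ∀ y ∈ GW, ⁅x, y⁆ ∈ G0 := by
    rintro _ ⟨v, rfl⟩ _ ⟨w, rfl⟩
    rw [hbrVW]
    exact ⟨_, rfl⟩
  have cV0 : ∀ x ∈ GV, ∀ y ∈ G0, ⁅x, y⁆ ∈ GV := by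
    intro x hx y hy
    rw [← lie_skew]
    exact GV.neg_mem (c0V y hy x hx)
  have cW0 : ∀ x ∈ GW, ∀ y ∈ G0, ⁅x, y⁆ ∈ GW := by
    intro x hx y hy
    rw [← lie_skew]
    exact GW.neg_mem (c0W y hy x hx)
  have cWV : ∀ x ∈ GW, ∀ y ∈ GV, ⁅x, y⁆ ∈ G0 := by
    intro x hx y hy
    rw [← lie_skew]
    exact G0.neg_mem (cVW y hy x hx)
  -- the higher graded pieces
  let Pp : ℕ → Submodule k (L₁ × L₂) := iterBracket GV GV
  let Pn : ℕ → Submodule k (L₁ × L₂) := iterBracket GW GW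
  have hPp0 : Pp 0 = GV := rfl
  have hPpS : ∀ n, Pp (n + 1) = bracketSpan GV (Pp n) := fun n => rfl
  have hPn0 : Pn 0 = GW := rfl
  have hPnS : ∀ n, Pn (n + 1) = bracketSpan GW (Pn n) := fun n => rfl
  have c0Pp : ∀ n, ∀ x ∈ G0, ∀ z ∈ Pp n, ⁅x, z⁆ ∈ Pp n := by
    intro n
    induction n with
    | zero => exact fun x hx z hz => c0V x hx z hz
    | succ n ih =>
      intro x hx z hz
      rw [hPpS n] at hz
      refine lie_bracketSpan_mem (fun a ha b hb => ?_) z hz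
      rw [leibniz_lie, hPpS n]
      exact add_mem (lie_mem_bracketSpan (c0V x hx a ha) hb)
        (lie_mem_bracketSpan ha (ih x hx b hb))
  have c0Pn : ∀ n, ∀ x ∈ G0, ∀ z ∈ Pn n, ⁅x, z⁆ ∈ Pn n := by
    intro n
    induction n with
    | zero => exact fun x hx z hz => c0W x hx z hz
    | succ n ih =>
      intro x hx z hz
      rw [hPnS n] at hz
      refine lie_bracketSpan_mem (fun a ha b hb => ?_) z hz
      rw [leibniz_lie, hPnS n]
      exact add_mem (lie_mem_bracketSpan (c0W x hx a ha) hb)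
        (lie_mem_bracketSpan ha (ih x hx b hb))
  have cPpW : ∀ n, ∀ z ∈ Pp (n + 1), ∀ w ∈ GW, ⁅z, w⁆ ∈ Pp n := by
    intro n
    induction n with
    | zero =>
      intro z hz w hw
      rw [hPpS 0] at hz
      refine bracketSpan_lie_mem (fun a ha b hb => ?_) z hz
      rw [leibniz_lie]
      refine add_mem ?_ ?_
      · exact c0V _ (cWV w hw a ha) b hb
      · exact cV0 a ha _ (cWV w hw b hb)
    | succ n ih =>
      intro z hz w hw
      rw [hPpS (n + 1)] at hz
      refine bracketSpan_lie_mem (fun a ha b hb => ?_) z hz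
      rw [leibniz_lie]
      refine add_mem ?_ ?_
      · exact c0Pp (n + 1) _ (cWV w hw a ha) b hb
      · have h1 : ⁅w, b⁆ ∈ Pp n := by
          rw [← lie_skew]
          exact (Pp n).neg_mem (ih b hb w hw)
        rw [hPpS n]
        exact lie_mem_bracketSpan ha h1
  have cPnV : ∀ n, ∀ z ∈ Pn (n + 1), ∀ v ∈ GV, ⁅z, v⁆ ∈ Pn n := by
    intro n
    induction n with
    | zero =>
      intro z hz v hv
      rw [hPnS 0] at hz
      refine bracketSpan_lie_mem (fun a ha b hb => ?_) z hz
      rw [leibniz_lie]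
      refine add_mem ?_ ?_
      · exact c0W _ (cVW v hv a ha) b hb
      · exact cW0 a ha _ (cVW v hv b hb)
    | succ n ih =>
      intro z hz v hv
      rw [hPnS (n + 1)] at hz
      refine bracketSpan_lie_mem (fun a ha b hb => ?_) z hz
      rw [leibniz_lie]
      refine add_mem ?_ ?_
      · exact c0Pn (n + 1) _ (cVW v hv a ha) b hb
      · have h1 : ⁅v, b⁆ ∈ Pn n := by
          rw [← lie_skew]
          exact (Pn n).neg_mem (ih b hb v hv)
        rw [hPnS n]
        exact lie_mem_bracketSpan ha h1
  -- correspondence properties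
  have corr0 : IsCorresp (A₁.grading 0) (A₂.grading 0) G0 := by
    refine ⟨?_, ?_, ?_, ?_, ?_⟩
    · rintro _ ⟨a, rfl⟩
      constructor
      · rw [← A₁.ιg_range]; exact ⟨a, rfl⟩
      · rw [← A₂.ιg_range]; exact ⟨τ a, rfl⟩
    · intro u hu
      rw [← A₁.ιg_range] at hu
      obtain ⟨a, rfl⟩ := hu
      exact ⟨j₀ a, ⟨a, rfl⟩, rfl⟩
    · intro u hu
      rw [← A₂.ιg_range] at hu
      obtain ⟨a, rfl⟩ := hu
      refine ⟨j₀ (τ.symm a), ⟨_, rfl⟩, ?_⟩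
      show A₂.ιg (τ (τ.symm a)) = A₂.ιg a
      rw [τ.apply_symm_apply]
    · rintro _ ⟨a, rfl⟩ h1
      have ha : a = 0 := A₁.ιg_inj (by rw [map_zero]; exact h1)
      show A₂.ιg ((τ : g₁ ≃ₗ[k] g₂) a) = 0
      rw [ha, map_zero, map_zero]
    · rintro _ ⟨a, rfl⟩ h2
      have hτa : τ a = 0 := A₂.ιg_inj (by rw [map_zero]; exact h2)
      have ha : a = 0 := by
        have h4 : (τ : g₁ ≃ₗ[k] g₂) a = 0 := hτa
        rwa [LinearEquiv.map_eq_zero_iff] at h4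
      show A₁.ιg a = 0
      rw [ha, map_zero]
  have corrV : IsCorresp (A₁.grading 1) (A₂.grading 1) GV := by
    refine ⟨?_, ?_, ?_, ?_, ?_⟩
    · rintro _ ⟨v, rfl⟩
      constructor
      · rw [← A₁.ιV_range]; exact ⟨v, rfl⟩
      · rw [← A₂.ιV_range]; exact ⟨σ v, rfl⟩
    · intro u hu
      rw [← A₁.ιV_range] at hu
      obtain ⟨v, rfl⟩ := hu
      exact ⟨jV v, ⟨v, rfl⟩, rfl⟩
    · intro u hu
      rw [← A₂.ιV_range] at hu
      obtain ⟨v, rfl⟩ := hu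
      refine ⟨jV (σ.symm v), ⟨_, rfl⟩, ?_⟩
      show A₂.ιV (σ (σ.symm v)) = A₂.ιV v
      rw [σ.apply_symm_apply]
    · rintro _ ⟨v, rfl⟩ h1
      have hv : v = 0 := A₁.ιV_inj (by rw [map_zero]; exact h1)
      show A₂.ιV (σ v) = 0
      rw [hv, map_zero, map_zero]
    · rintro _ ⟨v, rfl⟩ h2
      have hσv : σ v = 0 := A₂.ιV_inj (by rw [map_zero]; exact h2)
      have hv : v = 0 := by rwa [LinearEquiv.map_eq_zero_iff] at hσv
      show A₁.ιV v = 0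
      rw [hv, map_zero]
  have corrW : IsCorresp (A₁.grading (-1)) (A₂.grading (-1)) GW := by
    refine ⟨?_, ?_, ?_, ?_, ?_⟩
    · rintro _ ⟨w, rfl⟩
      constructor
      · rw [← A₁.ιW_range]; exact ⟨w, rfl⟩
      · rw [← A₂.ιW_range]; exact ⟨ς' w, rfl⟩
    · intro u hu
      rw [← A₁.ιW_range] at hu
      obtain ⟨w, rfl⟩ := hu
      exact ⟨jW w, ⟨w, rfl⟩, rfl⟩
    · intro u hu
      rw [← A₂.ιW_range] at hu
      obtain ⟨w, rfl⟩ := hu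
      obtain ⟨w₁, hw₁⟩ := hς'surj w
      refine ⟨jW w₁, ⟨_, rfl⟩, ?_⟩
      show A₂.ιW (ς' w₁) = A₂.ιW w
      rw [hw₁]
    · rintro _ ⟨w, rfl⟩ h1
      have hw : w = 0 := A₁.ιW_inj (by rw [map_zero]; exact h1)
      show A₂.ιW (ς' w) = 0
      rw [hw, map_zero, map_zero]
    · rintro _ ⟨w, rfl⟩ h2
      have hςw : ς' w = 0 := A₂.ιW_inj (by rw [map_zero]; exact h2)
      have hw : w = 0 := by
        rw [hς'app] at hςw
        have h3 : ς w = 0 := by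
          have := congrArg (fun z => c • z) hςw
          simpa [smul_smul, mul_inv_cancel₀ hc] using this
        rwa [LinearEquiv.map_eq_zero_iff] at h3
      show A₁.ιW w = 0
      rw [hw, map_zero]
  have corrPp : ∀ n : ℕ, IsCorresp (A₁.grading ((n : ℤ) + 1)) (A₂.grading ((n : ℤ) + 1)) (Pp n) := by
    intro n
    induction n with
    | zero =>
      have e : ((0 : ℕ) : ℤ) + 1 = 1 := by norm_num
      rw [e]
      exact corrV
    | succ n ih =>
      have e : ((n + 1 : ℕ) : ℤ) + 1 = ((n : ℤ) + 1) + 1 := by push_cast; ring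
      rw [e]
      have e2 : (1 : ℤ) + ((n : ℤ) + 1) = ((n : ℤ) + 1) + 1 := by ring
      have hmem : ∀ z ∈ Pp (n + 1),
          z.1 ∈ A₁.grading (((n : ℤ) + 1) + 1) ∧ z.2 ∈ A₂.grading (((n : ℤ) + 1) + 1) := by
        intro z hz
        rw [hPpS n] at hz
        have hle : bracketSpan GV (Pp n) ≤
            (A₁.grading (((n : ℤ) + 1) + 1)).prod (A₂.grading (((n : ℤ) + 1) + 1)) := by
          refine bracketSpan_le ?_
          intro x hx y hy
          obtain ⟨hx1, hx2⟩ := corrV.1 x hx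
          obtain ⟨hy1, hy2⟩ := ih.1 y hy
          rw [Submodule.mem_prod]
          constructor
          · have h := A₁.lie_mem 1 ((n : ℤ) + 1) x.1 hx1 y.1 hy1
            rw [e2] at h
            exact h
          · have h := A₂.lie_mem 1 ((n : ℤ) + 1) x.2 hx2 y.2 hy2
            rw [e2] at h
            exact h
        exact Submodule.mem_prod.mp (hle hz)
      refine ⟨hmem, ?_, ?_, ?_, ?_⟩
      · rw [A₁.span_pos ((n : ℤ) + 1) (by omega), Submodule.span_le]
        rintro _ ⟨x, hx, y, hy, rfl⟩
        obtain ⟨zx, hzx, hzx1⟩ := corrV.2.1 hx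
        replace hzx1 : zx.1 = x := hzx1
        obtain ⟨zy, hzy, hzy1⟩ := ih.2.1 hy
        replace hzy1 : zy.1 = y := hzy1
        refine ⟨⁅zx, zy⁆, ?_, ?_⟩
        · rw [hPpS n]
          exact lie_mem_bracketSpan hzx hzy
        · show ⁅zx, zy⁆.1 = ⁅x, y⁆
          rw [prodLie_fst, hzx1, hzy1]
      · rw [A₂.span_pos ((n : ℤ) + 1) (by omega), Submodule.span_le]
        rintro _ ⟨x, hx, y, hy, rfl⟩
        obtain ⟨zx, hzx, hzx1⟩ := corrV.2.2.1 hx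
        replace hzx1 : zx.2 = x := hzx1
        obtain ⟨zy, hzy, hzy1⟩ := ih.2.2.1 hy
        replace hzy1 : zy.2 = y := hzy1
        refine ⟨⁅zx, zy⁆, ?_, ?_⟩
        · rw [hPpS n]
          exact lie_mem_bracketSpan hzx hzy
        · show ⁅zx, zy⁆.2 = ⁅x, y⁆
          rw [prodLie_snd, hzx1, hzy1]
      · intro z hz h1
        refine A₂.trans_pos (((n : ℤ) + 1) + 1) (by omega) z.2 (hmem z hz).2 ?_
        intro y hy
        obtain ⟨zw, hzw, hzw2⟩ := corrW.2.2.1 hy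
        replace hzw2 : zw.2 = y := hzw2
        have hb : ⁅z, zw⁆ ∈ Pp n := cPpW n z hz zw hzw
        have hb1 : ⁅z, zw⁆.1 = 0 := by rw [prodLie_fst, h1, zero_lie]
        have hb2 := ih.2.2.2.1 _ hb hb1
        rw [prodLie_snd, hzw2] at hb2
        exact hb2
      · intro z hz h2
        refine A₁.trans_pos (((n : ℤ) + 1) + 1) (by omega) z.1 (hmem z hz).1 ?_
        intro y hy
        obtain ⟨zw, hzw, hzw1⟩ := corrW.2.1 hy
        replace hzw1 : zw.1 = y := hzw1
        have hb : ⁅z, zw⁆ ∈ Pp n := cPpW n z hz zw hzw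
        have hb2 : ⁅z, zw⁆.2 = 0 := by rw [prodLie_snd, h2, zero_lie]
        have hb1 := ih.2.2.2.2 _ hb hb2
        rw [prodLie_fst, hzw1] at hb1
        exact hb1
  have corrPn : ∀ n : ℕ,
      IsCorresp (A₁.grading (-(n : ℤ) - 1)) (A₂.grading (-(n : ℤ) - 1)) (Pn n) := by
    intro n
    induction n with
    | zero =>
      have e : -((0 : ℕ) : ℤ) - 1 = -1 := by norm_num
      rw [e]
      exact corrW
    | succ n ih =>
      have e : -((n + 1 : ℕ) : ℤ) - 1 = -((n : ℤ) + 1) - 1 := by push_cast; ring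
      rw [e]
      have e2 : (-1 : ℤ) + (-(n : ℤ) - 1) = -((n : ℤ) + 1) - 1 := by ring
      have e3 : -((n : ℤ) + 1) = -(n : ℤ) - 1 := by ring
      have hmem : ∀ z ∈ Pn (n + 1),
          z.1 ∈ A₁.grading (-((n : ℤ) + 1) - 1) ∧ z.2 ∈ A₂.grading (-((n : ℤ) + 1) - 1) := by
        intro z hz
        rw [hPnS n] at hz
        have hle : bracketSpan GW (Pn n) ≤
            (A₁.grading (-((n : ℤ) + 1) - 1)).prod (A₂.grading (-((n : ℤ) + 1) - 1)) := by
          refine bracketSpan_le ?_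
          intro x hx y hy
          obtain ⟨hx1, hx2⟩ := corrW.1 x hx
          obtain ⟨hy1, hy2⟩ := ih.1 y hy
          rw [Submodule.mem_prod]
          constructor
          · have h := A₁.lie_mem (-1) (-(n : ℤ) - 1) x.1 hx1 y.1 hy1
            rw [e2] at h
            exact h
          · have h := A₂.lie_mem (-1) (-(n : ℤ) - 1) x.2 hx2 y.2 hy2
            rw [e2] at h
            exact h
        exact Submodule.mem_prod.mp (hle hz)
      refine ⟨hmem, ?_, ?_, ?_, ?_⟩
      · rw [A₁.span_neg ((n : ℤ) + 1) (by omega), Submodule.span_le]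
        rintro _ ⟨x, hx, y, hy, rfl⟩
        rw [e3] at hy
        obtain ⟨zx, hzx, hzx1⟩ := corrW.2.1 hx
        replace hzx1 : zx.1 = x := hzx1
        obtain ⟨zy, hzy, hzy1⟩ := ih.2.1 hy
        replace hzy1 : zy.1 = y := hzy1
        refine ⟨⁅zx, zy⁆, ?_, ?_⟩
        · rw [hPnS n]
          exact lie_mem_bracketSpan hzx hzy
        · show ⁅zx, zy⁆.1 = ⁅x, y⁆
          rw [prodLie_fst, hzx1, hzy1]
      · rw [A₂.span_neg ((n : ℤ) + 1) (by omega), Submodule.span_le]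
        rintro _ ⟨x, hx, y, hy, rfl⟩
        rw [e3] at hy
        obtain ⟨zx, hzx, hzx1⟩ := corrW.2.2.1 hx
        replace hzx1 : zx.2 = x := hzx1
        obtain ⟨zy, hzy, hzy1⟩ := ih.2.2.1 hy
        replace hzy1 : zy.2 = y := hzy1
        refine ⟨⁅zx, zy⁆, ?_, ?_⟩
        · rw [hPnS n]
          exact lie_mem_bracketSpan hzx hzy
        · show ⁅zx, zy⁆.2 = ⁅x, y⁆
          rw [prodLie_snd, hzx1, hzy1]
      · intro z hz h1
        have e4 : -((n : ℤ) + 1) - 1 = -(((n : ℤ) + 1) + 1) := by ring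
        have hz2 := (hmem z hz).2
        rw [e4] at hz2
        refine A₂.trans_neg (((n : ℤ) + 1) + 1) (by omega) z.2 hz2 ?_
        intro y hy
        obtain ⟨zv, hzv, hzv2⟩ := corrV.2.2.1 hy
        replace hzv2 : zv.2 = y := hzv2
        have hb : ⁅z, zv⁆ ∈ Pn n := cPnV n z hz zv hzv
        have hb1 : ⁅z, zv⁆.1 = 0 := by rw [prodLie_fst, h1, zero_lie]
        have hb2 := ih.2.2.2.1 _ hb hb1
        rw [prodLie_snd, hzv2] at hb2
        exact hb2
      · intro z hz h2
        have e4 : -((n : ℤ) + 1) - 1 = -(((n : ℤ) + 1) + 1) := by ring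
        have hz1 := (hmem z hz).1
        rw [e4] at hz1
        refine A₁.trans_neg (((n : ℤ) + 1) + 1) (by omega) z.1 hz1 ?_
        intro y hy
        obtain ⟨zv, hzv, hzv1⟩ := corrV.2.1 hy
        replace hzv1 : zv.1 = y := hzv1
        have hb : ⁅z, zv⁆ ∈ Pn n := cPnV n z hz zv hzv
        have hb2 : ⁅z, zv⁆.2 = 0 := by rw [prodLie_snd, h2, zero_lie]
        have hb1 := ih.2.2.2.2 _ hb hb2
        rw [prodLie_fst, hzv1] at hb1
        exact hb1
  -- the ℤ-indexed family of graphs and their supremum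
  let Gz : ℤ → Submodule k (L₁ × L₂) := fun i =>
    match i with
    | Int.ofNat 0 => G0
    | Int.ofNat (n + 1) => Pp n
    | Int.negSucc n => Pn n
  have hGz0 : Gz 0 = G0 := rfl
  have hGzP : ∀ n : ℕ, Gz ((n : ℤ) + 1) = Pp n := fun n => rfl
  have hGzN : ∀ n : ℕ, Gz (-(n : ℤ) - 1) = Pn n := by
    intro n
    have e : (-(n : ℤ) - 1) = Int.negSucc n := by rw [Int.negSucc_eq]; ring
    rw [e]
  have corrG : ∀ i : ℤ, IsCorresp (A₁.grading i) (A₂.grading i) (Gz i) := by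
    intro i
    cases i with
    | ofNat n =>
      cases n with
      | zero => exact corr0
      | succ n => exact corrPp n
    | negSucc n =>
      have e : Int.negSucc n = -(n : ℤ) - 1 := by rw [Int.negSucc_eq]; ring
      show IsCorresp (A₁.grading (Int.negSucc n)) (A₂.grading (Int.negSucc n)) (Pn n)
      rw [e]
      exact corrPn n
  let S : Submodule k (L₁ × L₂) := ⨆ i, Gz i
  have hG0S : G0 ≤ S := hGz0 ▸ le_iSup Gz 0
  have hPpSup : ∀ n, Pp n ≤ S := fun n => by rw [← hGzP n]; exact le_iSup Gz ((n : ℤ) + 1)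
  have hPnSup : ∀ n, Pn n ≤ S := fun n => hGzN n ▸ le_iSup Gz (-(n : ℤ) - 1)
  have hGVS : GV ≤ S := hPpSup 0
  have hGWS : GW ≤ S := hPnSup 0
  -- closure of S under the bracket
  have SV : ∀ v ∈ GV, ∀ z ∈ S, ⁅v, z⁆ ∈ S := by
    intro v hv
    refine lie_iSup_mem fun i => ?_
    cases i with
    | ofNat n =>
      cases n with
      | zero => exact fun z hz => hGVS (cV0 v hv z hz)
      | succ n =>
        intro z hz
        refine hPpSup (n + 1) ?_
        rw [hPpS n]
        exact lie_mem_bracketSpan hv hz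
    | negSucc n =>
      intro z hz
      cases n with
      | zero => exact hG0S (cVW v hv z hz)
      | succ m =>
        have h1 : ⁅z, v⁆ ∈ Pn m := cPnV m z hz v hv
        rw [← lie_skew]
        exact S.neg_mem (hPnSup m h1)
  have SW : ∀ w ∈ GW, ∀ z ∈ S, ⁅w, z⁆ ∈ S := by
    intro w hw
    refine lie_iSup_mem fun i => ?_
    cases i with
    | ofNat n =>
      cases n with
      | zero => exact fun z hz => hGWS (cW0 w hw z hz)
      | succ n =>
        intro z hz
        cases n with
        | zero => exact hG0S (cWV w hw z hz)
        | succ m =>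
          have h1 : ⁅z, w⁆ ∈ Pp m := cPpW m z hz w hw
          rw [← lie_skew]
          exact S.neg_mem (hPpSup m h1)
    | negSucc n =>
      intro z hz
      refine hPnSup (n + 1) ?_
      rw [hPnS n]
      exact lie_mem_bracketSpan hw hz
  have S0 : ∀ a ∈ G0, ∀ z ∈ S, ⁅a, z⁆ ∈ S := by
    intro a ha
    refine lie_iSup_mem fun i => ?_
    cases i with
    | ofNat n =>
      cases n with
      | zero => exact fun z hz => hG0S (c00 a ha z hz)
      | succ n => exact fun z hz => hPpSup n (c0Pp n a ha z hz)
    | negSucc n => exact fun z hz => hPnSup n (c0Pn n a ha z hz)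
  have SPp : ∀ n, ∀ x ∈ Pp n, ∀ z ∈ S, ⁅x, z⁆ ∈ S := by
    intro n
    induction n with
    | zero => exact fun x hx z hz => SV x hx z hz
    | succ n ih =>
      intro x hx z hz
      rw [hPpS n] at hx
      refine bracketSpan_lie_mem (fun a ha b hb => ?_) x hx
      rw [leibniz_lie]
      refine add_mem ?_ ?_
      · have h1 : ⁅z, a⁆ ∈ S := by
          rw [← lie_skew]; exact S.neg_mem (SV a ha z hz)
        have h2 : ⁅b, ⁅z, a⁆⁆ ∈ S := ih b hb _ h1
        rw [← lie_skew]; exact S.neg_mem h2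
      · have h1 : ⁅z, b⁆ ∈ S := by
          rw [← lie_skew]; exact S.neg_mem (ih b hb z hz)
        exact SV a ha _ h1
  have SPn : ∀ n, ∀ x ∈ Pn n, ∀ z ∈ S, ⁅x, z⁆ ∈ S := by
    intro n
    induction n with
    | zero => exact fun x hx z hz => SW x hx z hz
    | succ n ih =>
      intro x hx z hz
      rw [hPnS n] at hx
      refine bracketSpan_lie_mem (fun a ha b hb => ?_) x hx
      rw [leibniz_lie]
      refine add_mem ?_ ?_
      · have h1 : ⁅z, a⁆ ∈ S := by
          rw [← lie_skew]; exact S.neg_mem (SW a ha z hz)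
        have h2 : ⁅b, ⁅z, a⁆⁆ ∈ S := ih b hb _ h1
        rw [← lie_skew]; exact S.neg_mem h2
      · have h1 : ⁅z, b⁆ ∈ S := by
          rw [← lie_skew]; exact S.neg_mem (ih b hb z hz)
        exact SW a ha _ h1
  have cS : ∀ x ∈ S, ∀ z ∈ S, ⁅x, z⁆ ∈ S := by
    intro x hx z hz
    refine iSup_lie_mem (fun i => ?_) x hx
    cases i with
    | ofNat n =>
      cases n with
      | zero => exact fun w hw => S0 w hw z hz
      | succ n => exact fun w hw => SPp n w hw z hz
    | negSucc n => exact fun w hw => SPn n w hw z hz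
  let K : LieSubalgebra k (L₁ × L₂) :=
    { toSubmodule := S, lie_mem' := fun {x y} hx hy => cS x hx y hy }
  -- surjectivity of both projections
  have hfst_surj : ∀ u : L₁, ∃ z ∈ S, z.1 = u := by
    intro u
    have hu : u ∈ ⨆ i, A₁.grading i := by
      rw [A₁.isInternal.submodule_iSup_eq_top]; trivial
    have hle : (⨆ i, A₁.grading i) ≤ Submodule.map (LinearMap.fst k L₁ L₂) S :=
      iSup_le fun i => le_trans (corrG i).2.1 (Submodule.map_mono (le_iSup Gz i))
    obtain ⟨z, hz, hz1⟩ := hle hu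
    exact ⟨z, hz, hz1⟩
  have hsnd_surj : ∀ u : L₂, ∃ z ∈ S, z.2 = u := by
    intro u
    have hu : u ∈ ⨆ i, A₂.grading i := by
      rw [A₂.isInternal.submodule_iSup_eq_top]; trivial
    have hle : (⨆ i, A₂.grading i) ≤ Submodule.map (LinearMap.snd k L₁ L₂) S :=
      iSup_le fun i => le_trans (corrG i).2.2.1 (Submodule.map_mono (le_iSup Gz i))
    obtain ⟨z, hz, hz1⟩ := hle hu
    exact ⟨z, hz, hz1⟩
  -- injectivity of both projections
  have key_inj : ∀ z ∈ S, (z.1 = 0 → z = 0) ∧ (z.2 = 0 → z = 0) := by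
    intro z hz
    have hz' : z ∈ ⨆ i, Gz i := hz
    rw [Submodule.mem_iSup_iff_exists_dfinsupp'] at hz'
    obtain ⟨f, hf⟩ := hz'
    constructor
    · intro h1
      let f₁ : Π₀ i : ℤ, A₁.grading i :=
        DFinsupp.mapRange
          (fun i x => (⟨(x.val).1, ((corrG i).1 x.val x.property).1⟩ : A₁.grading i))
          (fun i => rfl) f
      have hsum1 : (f₁.sum fun _ x => (x : L₁)) = z.1 := by
        have h2 : (f₁.sum fun _ x => (x : L₁)) = f.sum fun i x => (x : L₁ × L₂).1 :=
          DFinsupp.sum_mapRange_index (fun i => rfl)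
        rw [h2, ← congrArg Prod.fst hf, DFinsupp.sum, DFinsupp.sum]
        exact (map_sum (AddMonoidHom.fst L₁ L₂) _ f.support).symm
      have hf₁0 : f₁ = 0 := by
        apply (A₁.isInternal.submodule_iSupIndep).dfinsupp_lsum_injective
        rw [map_zero, DFinsupp.lsum_apply_apply, DFinsupp.sumAddHom_apply]
        exact hsum1.trans h1
      have hfi : ∀ i : ℤ, f i = 0 := by
        intro i
        have h5 : f₁ i = 0 := by rw [hf₁0]; rfl
        have hfi1 : (f i : L₁ × L₂).1 = 0 := by
          have h6 := congrArg Subtype.val h5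
          rw [ZeroMemClass.coe_zero] at h6
          exact h6
        have hfi2 : (f i : L₁ × L₂).2 = 0 := (corrG i).2.2.2.1 _ (f i).2 hfi1
        refine Subtype.ext ?_
        rw [Prod.ext_iff]
        exact ⟨hfi1, hfi2⟩
      rw [← hf]
      have hf0 : f = 0 := DFunLike.ext f 0 fun i => (hfi i).trans rfl
      rw [hf0]
      exact DFinsupp.sum_zero_index
    · intro h2
      let f₂ : Π₀ i : ℤ, A₂.grading i :=
        DFinsupp.mapRange
          (fun i x => (⟨(x.val).2, ((corrG i).1 x.val x.property).2⟩ : A₂.grading i))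
          (fun i => rfl) f
      have hsum2 : (f₂.sum fun _ x => (x : L₂)) = z.2 := by
        have h3 : (f₂.sum fun _ x => (x : L₂)) = f.sum fun i x => (x : L₁ × L₂).2 :=
          DFinsupp.sum_mapRange_index (fun i => rfl)
        rw [h3, ← congrArg Prod.snd hf, DFinsupp.sum, DFinsupp.sum]
        exact (map_sum (AddMonoidHom.snd L₁ L₂) _ f.support).symm
      have hf₂0 : f₂ = 0 := by
        apply (A₂.isInternal.submodule_iSupIndep).dfinsupp_lsum_injective
        rw [map_zero, DFinsupp.lsum_apply_apply, DFinsupp.sumAddHom_apply]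
        exact hsum2.trans h2
      have hfi : ∀ i : ℤ, f i = 0 := by
        intro i
        have h5 : f₂ i = 0 := by rw [hf₂0]; rfl
        have hfi2 : (f i : L₁ × L₂).2 = 0 := by
          have h6 := congrArg Subtype.val h5
          rw [ZeroMemClass.coe_zero] at h6
          exact h6
        have hfi1 : (f i : L₁ × L₂).1 = 0 := (corrG i).2.2.2.2 _ (f i).2 hfi2
        refine Subtype.ext ?_
        rw [Prod.ext_iff]
        exact ⟨hfi1, hfi2⟩
      rw [← hf]
      have hf0 : f = 0 := DFunLike.ext f 0 fun i => (hfi i).trans rfl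
      rw [hf0]
      exact DFinsupp.sum_zero_index
  -- the two projections of K are bijective Lie algebra morphisms
  let prK₁ : K →ₗ⁅k⁆ L₁ := (lieFst (K := k)).comp K.incl
  let prK₂ : K →ₗ⁅k⁆ L₂ := (lieSnd (K := k)).comp K.incl
  have hbij₁ : Function.Bijective prK₁ := by
    constructor
    · intro u w h
      have hu : (u : L₁ × L₂) ∈ S := u.2
      have hw : (w : L₁ × L₂) ∈ S := w.2
      have hmem : ((u : L₁ × L₂) - (w : L₁ × L₂)) ∈ S := S.sub_mem hu hw
      have h' : (u : L₁ × L₂).1 = (w : L₁ × L₂).1 := h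
      have h1 : ((u : L₁ × L₂) - (w : L₁ × L₂)).1 = 0 := by
        rw [Prod.fst_sub, h', sub_self]
      have h2 := (key_inj _ hmem).1 h1
      have h3 : (u : L₁ × L₂) = (w : L₁ × L₂) := by rwa [sub_eq_zero] at h2
      exact Subtype.ext h3
    · intro u
      obtain ⟨z, hz, hz1⟩ := hfst_surj u
      exact ⟨⟨z, hz⟩, hz1⟩
  have hbij₂ : Function.Bijective prK₂ := by
    constructor
    · intro u w h
      have hu : (u : L₁ × L₂) ∈ S := u.2
      have hw : (w : L₁ × L₂) ∈ S := w.2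
      have hmem : ((u : L₁ × L₂) - (w : L₁ × L₂)) ∈ S := S.sub_mem hu hw
      have h' : (u : L₁ × L₂).2 = (w : L₁ × L₂).2 := h
      have h1 : ((u : L₁ × L₂) - (w : L₁ × L₂)).2 = 0 := by
        rw [Prod.snd_sub, h', sub_self]
      have h2 := (key_inj _ hmem).2 h1
      have h3 : (u : L₁ × L₂) = (w : L₁ × L₂) := by rwa [sub_eq_zero] at h2
      exact Subtype.ext h3
    · intro u
      obtain ⟨z, hz, hz1⟩ := hsnd_surj u
      exact ⟨⟨z, hz⟩, hz1⟩
  exact ⟨(LieEquiv.ofBijective prK₁ hbij₁).symm.trans (LieEquiv.ofBijective prK₂ hbij₂)⟩
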